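/- Let S be an almost unit-stabilized finite commutative unital semigroup and S' any finite commutative unital semigroup. Then D(S × S') = max(D(U(S) × S'), D(S, {0}) + D(S') − 1). -/

import Mathlib

/-- A list (sequence) in a commutative monoid is reducible if a proper
subsequence has the same product. -/
def Reducible {M : Type*} [CommMonoid M] (A : List M) : Prop :=
  ∃ B : List M, List.Sublist B A ∧ B.length < A.length ∧ B.prod = A.prod

/-- The Davenport constant: the least positive `n` such that every sequence of
length `n` is reducible (`⊤` if none exists). -/
noncomputable def davenport (M : Type*) [CommMonoid M] : ℕ∞ :=
  sInf {k : ℕ∞ | ∃ n : ℕ, k = n ∧ 0 < n ∧ ∀ A : List M, A.length = n → Reducible A}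

/-- An ideal of a commutative monoid. -/
def IsMulIdeal {M : Type*} [CommMonoid M] (T : Set M) : Prop :=
  ∀ s t : M, t ∈ T → s * t ∈ T

/-- The relative Davenport constant `D(S, T)`: the least positive `n` such
that every sequence of length `n` with product in `T` is reducible. -/
noncomputable def davenportRel (M : Type*) [CommMonoid M] (T : Set M) : ℕ∞ :=
  sInf {k : ℕ∞ | ∃ n : ℕ, k = n ∧ 0 < n ∧
    ∀ A : List M, A.length = n → A.prod ∈ T → Reducible A}

/-- `(S, T)` is a unit-stabilized pair. -/
def UnitStabilizedPair (M : Type*) [CommMonoid M] (T : Set M) : Prop :=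
  ∀ a b : M, a * b ∉ T →
    {u : Mˣ | (u : M) * a = a} = {u : Mˣ | (u : M) * (a * b) = a * b} →
    ∃ u : Mˣ, a * b = a * u

set_option linter.unusedSectionVars false



section Basics
variable {M : Type*} [CommMonoid M]

theorem reducible_iff_subperm {A : List M} :
    Reducible A ↔ ∃ B : List M, B.Subperm A ∧ B.length < A.length ∧ B.prod = A.prod := by
  constructor
  · rintro ⟨B, h1, h2, h3⟩; exact ⟨B, h1.subperm, h2, h3⟩
  · rintro ⟨B, ⟨B', hperm, hsub⟩, h2, h3⟩
    exact ⟨B', hsub, by rwa [hperm.length_eq], by rwa [hperm.prod_eq]⟩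

theorem reducible_iff_multiset {A : List M} :
    Reducible A ↔ ∃ B : Multiset M, B ≤ ↑A ∧ Multiset.card B < A.length ∧ B.prod = A.prod := by
  rw [reducible_iff_subperm]
  constructor
  · rintro ⟨B, h1, h2, h3⟩
    exact ⟨↑B, Multiset.coe_le.mpr h1, by simpa using h2, by simpa using h3⟩
  · rintro ⟨B, h1, h2, h3⟩
    refine ⟨B.toList, ?_, ?_, ?_⟩
    · rw [← Multiset.coe_le, B.coe_toList]; exact h1
    · simpa using h2
    · rw [← Multiset.prod_toList] at h3; simpa using h3

/-- pigeonhole: long lists are reducible -/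
theorem reducible_of_card_le [Finite M] {A : List M} (h : Nat.card M ≤ A.length) :
    Reducible A := by
  have hni : ¬ Function.Injective (fun k : Fin (A.length + 1) => (A.take k).prod) := by
    intro hinj
    have := Nat.card_le_card_of_injective _ hinj
    simp [Nat.card_eq_fintype_card] at this
    omega
  rw [Function.not_injective_iff] at hni
  obtain ⟨i, j, hij, hne⟩ := hni
  wlog hlt : (i : ℕ) < (j : ℕ) generalizing i j
  · exact this j i hij.symm (Ne.symm hne) (by omega)
  refine ⟨A.take i ++ A.drop j, ?_, ?_, ?_⟩
  · have hd : A.drop (j : ℕ) = (A.drop i).drop ((j : ℕ) - i) := by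
      rw [List.drop_drop]; congr 1; omega
    have : (A.drop (j:ℕ)).Sublist (A.drop (i:ℕ)) := by
      rw [hd]; exact List.drop_sublist _ _
    have := this.append_left (A.take i)
    rwa [A.take_append_drop] at this
  · have hj : (j : ℕ) ≤ A.length := by omega
    simp only [List.length_append, List.length_take, List.length_drop]
    omega
  · have h1 := A.prod_take_mul_prod_drop (j : ℕ)
    rw [List.prod_append, ← h1, hij]

/-- every list of length `n` is reducible -/
def AllRed (M : Type*) [CommMonoid M] (n : ℕ) : Prop :=
  ∀ A : List M, A.length = n → Reducible A

def AllRedRel (S : Type*) [CommMonoidWithZero S] (n : ℕ) : Prop :=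
  ∀ A : List S, A.length = n → A.prod = 0 → Reducible A

theorem not_allRed_zero : ¬ AllRed M 0 := by
  intro h
  obtain ⟨B, h1, h2, h3⟩ := h [] rfl
  simp at h2

theorem reducible_cons_of_mul {a h : M} {t B : List M}
    (hB : B.Sublist ((a * h) :: t)) (hlen : B.length < t.length + 1)
    (hprod : B.prod = ((a * h) :: t).prod) :
    Reducible (a :: h :: t) := by
  rcases List.sublist_cons_iff.mp hB with hB' | ⟨B', rfl, hB'⟩
  · refine ⟨B, (hB'.cons _).cons _, by simp only [List.length_cons]; omega, ?_⟩
    rw [hprod]; simp [mul_assoc]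
  · refine ⟨a :: h :: B', ((hB'.cons₂ _).cons₂ _ : _), ?_, ?_⟩
    · simp only [List.length_cons] at hlen ⊢; omega
    simp only [List.prod_cons] at hprod ⊢
    rw [← mul_assoc, hprod]
    simp [mul_assoc]

theorem allRed_succ {n : ℕ} (h : AllRed M n) : AllRed M (n + 1) := by
  rcases Nat.eq_zero_or_pos n with rfl | hn
  · exact absurd h not_allRed_zero
  rintro (_ | ⟨a, _ | ⟨h', t⟩⟩) hA
  · simp at hA
  · simp at hA; omega
  · have hlen : t.length + 2 = n + 1 := by simpa using hA
    have ht : ((a * h') :: t).length = n := by simp; omega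
    obtain ⟨B, h1, h2, h3⟩ := h _ ht
    exact reducible_cons_of_mul h1 (by rw [ht] at h2; omega) h3

theorem allRedRel_succ {S : Type*} [CommMonoidWithZero S] {n : ℕ} (hn : 0 < n)
    (h : AllRedRel S n) : AllRedRel S (n + 1) := by
  rintro (_ | ⟨a, _ | ⟨h', t⟩⟩) hA hA0
  · simp at hA
  · simp at hA; omega
  · have hlen : t.length + 2 = n + 1 := by simpa using hA
    have ht : ((a * h') :: t).length = n := by simp; omega
    have hprod : ((a * h') :: t).prod = 0 := by
      simp only [List.prod_cons] at hA0 ⊢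
      rw [mul_assoc]; exact hA0
    obtain ⟨B, h1, h2, h3⟩ := h _ ht hprod
    exact reducible_cons_of_mul h1 (by rw [ht] at h2; omega) h3

end Basics

section Dnat
variable (M : Type*) [CommMonoid M]

noncomputable def Dnat : ℕ := sInf {n : ℕ | 0 < n ∧ AllRed M n}

noncomputable def DnatRel (S : Type*) [CommMonoidWithZero S] : ℕ :=
  sInf {n : ℕ | 0 < n ∧ AllRedRel S n}

variable [Finite M]

theorem dnat_set_nonempty : {n : ℕ | 0 < n ∧ AllRed M n}.Nonempty := by
  refine ⟨Nat.card M, Nat.card_pos, fun A hA => reducible_of_card_le (le_of_eq hA.symm)⟩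

theorem dnat_mem : 0 < Dnat M ∧ AllRed M (Dnat M) :=
  Nat.sInf_mem (dnat_set_nonempty M)

theorem dnat_pos : 0 < Dnat M := (dnat_mem M).1

theorem allRed_dnat : AllRed M (Dnat M) := (dnat_mem M).2

theorem allRed_of_dnat_le {n : ℕ} (h : Dnat M ≤ n) : AllRed M n := by
  induction n with
  | zero => have := dnat_pos M; omega
  | succ k ih =>
    rcases Nat.lt_or_ge (Dnat M) (k+1) with h' | h'
    · exact allRed_succ (ih (by omega))
    · have : Dnat M = k + 1 := by omega
      rw [← this]; exact allRed_dnat M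

theorem reducible_of_dnat_le {A : List M} (h : Dnat M ≤ A.length) : Reducible A :=
  allRed_of_dnat_le M h A rfl

theorem davenport_eq_dnat : davenport M = (Dnat M : ℕ∞) := by
  apply le_antisymm
  · apply sInf_le
    exact ⟨Dnat M, rfl, dnat_pos M, allRed_dnat M⟩
  · apply le_sInf
    rintro k ⟨n, rfl, hn, hall⟩
    exact_mod_cast Nat.sInf_le (show n ∈ {n : ℕ | 0 < n ∧ AllRed M n} from ⟨hn, hall⟩)

theorem not_allRed_of_lt {n : ℕ} (h : n < Dnat M) : ¬ AllRed M n := by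
  rcases Nat.eq_zero_or_pos n with rfl | hn
  · exact not_allRed_zero
  · intro hall
    exact absurd (Nat.sInf_le (show n ∈ {n : ℕ | 0 < n ∧ AllRed M n} from ⟨hn, hall⟩)) (by unfold Dnat at h; omega)

end Dnat

section DnatRelFacts
variable (S : Type*) [CommMonoidWithZero S] [Finite S]

theorem dnatRel_set_nonempty : {n : ℕ | 0 < n ∧ AllRedRel S n}.Nonempty :=
  ⟨Nat.card S, Nat.card_pos, fun A hA _ => reducible_of_card_le (le_of_eq hA.symm)⟩

theorem dnatRel_mem : 0 < DnatRel S ∧ AllRedRel S (DnatRel S) :=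
  Nat.sInf_mem (dnatRel_set_nonempty S)

theorem dnatRel_pos : 0 < DnatRel S := (dnatRel_mem S).1

theorem allRedRel_of_le {n : ℕ} (h : DnatRel S ≤ n) : AllRedRel S n := by
  induction n with
  | zero => have := dnatRel_pos S; omega
  | succ k ih =>
    rcases Nat.lt_or_ge (DnatRel S) (k+1) with h' | h'
    · exact allRedRel_succ (by have := dnatRel_pos S; omega) (ih (by omega))
    · have : DnatRel S = k + 1 := by omega
      rw [← this]; exact (dnatRel_mem S).2

theorem reducible_of_dnatRel_le {A : List S} (h : DnatRel S ≤ A.length)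
    (h0 : A.prod = 0) : Reducible A :=
  allRedRel_of_le S h A rfl h0

theorem davenportRel_eq_dnatRel : davenportRel S ({0} : Set S) = (DnatRel S : ℕ∞) := by
  apply le_antisymm
  · apply sInf_le
    refine ⟨DnatRel S, rfl, dnatRel_pos S, fun A hA h0 => (dnatRel_mem S).2 A hA (by simpa using h0)⟩
  · apply le_sInf
    rintro k ⟨n, rfl, hn, hall⟩
    exact_mod_cast Nat.sInf_le (show n ∈ {n : ℕ | 0 < n ∧ AllRedRel S n} from ⟨hn, fun A hA h0 => hall A hA (by simpa using h0)⟩)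

/-- extraction: an irreducible zero-product list of length `DnatRel S - 1`. -/
theorem exists_irreducible_zero :
    ∃ A : List S, A.length = DnatRel S - 1 ∧ A.prod = 0 ∧ ¬ Reducible A := by
  rcases Nat.lt_or_ge 1 (DnatRel S) with h1 | h1
  · have hnot : ¬ AllRedRel S (DnatRel S - 1) := by
      intro hall
      exact absurd (Nat.sInf_le (show DnatRel S - 1 ∈ {n : ℕ | 0 < n ∧ AllRedRel S n} from ⟨by omega, hall⟩)) (by unfold DnatRel at h1 ⊢; omega)
    simp only [AllRedRel, not_forall] at hnot
    obtain ⟨A, hA, h0, hred⟩ := hnot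
    exact ⟨A, hA, h0, hred⟩
  · have h1' : DnatRel S = 1 := by have := dnatRel_pos S; omega
    have hone : (1 : S) = 0 := by
      have := (dnatRel_mem S).2 [(0 : S)] (by simp [h1']) (by simp)
      obtain ⟨B, hB, hlen, hprod⟩ := this
      have : B = [] := List.length_eq_zero_iff.mp (by simp only [List.length_cons, List.length_nil] at hlen; omega)
      subst this; simpa using hprod
    refine ⟨[], by simp [h1'], by simpa using hone, ?_⟩
    rintro ⟨B, hB, hlen, _⟩; simp at hlen

end DnatRelFacts

section Transfer
variable {M N : Type*} [CommMonoid M] [CommMonoid N]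

theorem exists_irreducible (M : Type*) [CommMonoid M] [Finite M] :
    ∃ A : List M, A.length = Dnat M - 1 ∧ ¬ Reducible A := by
  rcases Nat.lt_or_ge 1 (Dnat M) with h1 | h1
  · have hnot : ¬ AllRed M (Dnat M - 1) := not_allRed_of_lt M (by omega)
    simp only [AllRed, not_forall] at hnot
    obtain ⟨A, hA, hred⟩ := hnot
    exact ⟨A, hA, hred⟩
  · have h1' : Dnat M = 1 := by have := dnat_pos M; omega
    refine ⟨[], by simp [h1'], ?_⟩
    rintro ⟨B, hB, hlen, _⟩; simp at hlen

theorem lt_dnat_of_not_allRed [Finite M] {n : ℕ} (h : ¬ AllRed M n) : n < Dnat M := by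
  by_contra hle
  exact h (allRed_of_dnat_le M (by omega))

theorem allRed_of_injective_hom (f : M →* N) (hf : Function.Injective f) {n : ℕ}
    (h : AllRed N n) : AllRed M n := by
  intro C hC
  obtain ⟨B, hB, hlen, hprod⟩ := h (C.map f) (by simpa using hC)
  obtain ⟨C', hC', rfl⟩ := List.sublist_map_iff.mp hB
  refine ⟨C', hC', by simpa using hlen, hf ?_⟩
  rw [List.prod_hom C' f, List.prod_hom C f] at hprod
  exact hprod

end Transfer

section Lower
variable {S : Type*} [CommMonoidWithZero S] [Finite S]
variable {S' : Type*} [CommMonoid S'] [Finite S']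

theorem prod_map_inl (l : List S) :
    (l.map (⇑(MonoidHom.inl S S'))).prod = (l.prod, (1 : S')) := by
  rw [List.prod_hom l (MonoidHom.inl S S')]; rfl

theorem prod_map_inr (l : List S') :
    (l.map (⇑(MonoidHom.inr S S'))).prod = ((1 : S), l.prod) := by
  rw [List.prod_hom l (MonoidHom.inr S S')]; rfl

theorem not_reducible_combined {LA : List S} {LB : List S'}
    (hA0 : LA.prod = 0) (hAirr : ¬ Reducible LA) (hBirr : ¬ Reducible LB) :
    ¬ Reducible (LA.map (⇑(MonoidHom.inl S S')) ++ LB.map (⇑(MonoidHom.inr S S'))) := by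
  rintro ⟨B, hB, hlen, hprod⟩
  obtain ⟨B₁, B₂, rfl, hB₁, hB₂⟩ := List.sublist_append_iff.mp hB
  obtain ⟨LA', hLA', rfl⟩ := List.sublist_map_iff.mp hB₁
  obtain ⟨LB', hLB', rfl⟩ := List.sublist_map_iff.mp hB₂
  rw [List.prod_append, List.prod_append, prod_map_inl, prod_map_inr,
    prod_map_inl, prod_map_inr, Prod.mk_mul_mk, Prod.mk_mul_mk, Prod.mk.injEq,
    mul_one, one_mul, mul_one, one_mul] at hprod
  obtain ⟨h1, h2⟩ := hprod
  have hA' : LA'.length = LA.length := by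
    by_contra hne
    exact hAirr ⟨LA', hLA', lt_of_le_of_ne hLA'.length_le hne, by rw [h1, hA0]⟩
  have hB' : LB'.length = LB.length := by
    by_contra hne
    exact hBirr ⟨LB', hLB', lt_of_le_of_ne hLB'.length_le hne, h2⟩
  simp only [List.length_append, List.length_map, hA', hB'] at hlen
  omega

theorem lower_bound_sum :
    DnatRel S + Dnat S' - 1 ≤ Dnat (S × S') := by
  obtain ⟨LA, hlenA, hA0, hAirr⟩ := exists_irreducible_zero S
  obtain ⟨LB, hlenB, hBirr⟩ := exists_irreducible S'
  have hirr := not_reducible_combined (S := S) (S' := S') hA0 hAirr hBirr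
  have hlen : (LA.map (⇑(MonoidHom.inl S S')) ++ LB.map (⇑(MonoidHom.inr S S'))).length
      = DnatRel S + Dnat S' - 2 := by
    have := dnatRel_pos S; have := dnat_pos S'
    simp only [List.length_append, List.length_map, hlenA, hlenB]; omega
  have hnot : ¬ AllRed (S × S') (DnatRel S + Dnat S' - 2) := fun hall => hirr (hall _ hlen)
  have := lt_dnat_of_not_allRed hnot
  have := dnatRel_pos S; have := dnat_pos S'
  omega

theorem lower_bound_units :
    Dnat (Sˣ × S') ≤ Dnat (S × S') := by
  have hinj : Function.Injective ⇑((Units.coeHom S).prodMap (MonoidHom.id S')) := by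
    intro p q h
    have h1 := congrArg Prod.fst h
    have h2 := congrArg Prod.snd h
    simp only [MonoidHom.coe_prodMap, Prod.map_fst, Prod.map_snd, Units.coeHom_apply, MonoidHom.id_apply] at h1 h2
    exact Prod.ext (Units.ext h1) h2
  exact Nat.sInf_le (show Dnat (S × S') ∈ {n : ℕ | 0 < n ∧ AllRed (Sˣ × S') n} from
    ⟨dnat_pos _, allRed_of_injective_hom _ hinj (allRed_dnat _)⟩)

end Lower

section Stab
variable {S : Type*} [CommMonoidWithZero S]

/-- The stabilizer of `x` in the unit group, as a subgroup. -/
def stabSub (x : S) : Subgroup Sˣ where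
  carrier := {u : Sˣ | (u : S) * x = x}
  one_mem' := by simp
  mul_mem' := by
    intro u v hu hv
    simp only [Set.mem_setOf_eq, Units.val_mul] at *
    rw [mul_assoc, hv, hu]
  inv_mem' := by
    intro u hu
    simp only [Set.mem_setOf_eq] at *
    calc (↑u⁻¹ : S) * x = ↑u⁻¹ * (↑u * x) := by rw [hu]
    _ = x := by rw [← mul_assoc, Units.inv_mul, one_mul]

theorem mem_stabSub {x : S} {u : Sˣ} : u ∈ stabSub x ↔ (u : S) * x = x := Iff.rfl

theorem stabSub_le_mul (x y : S) : stabSub x ≤ stabSub (x * y) := by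
  intro u hu
  rw [mem_stabSub] at *
  rw [← mul_assoc, hu]

theorem stabSub_mul_unit (x : S) (u : Sˣ) : stabSub (x * ↑u) = stabSub x := by
  ext v
  simp only [mem_stabSub]
  constructor
  · intro h
    have := congrArg (fun z => z * (↑u⁻¹ : S)) h
    simpa [mul_assoc, Units.mul_inv_cancel_right] using this
  · intro h
    rw [← mul_assoc, h]

end Stab

theorem exists_minimal_multiset {X : Type*} (P : Multiset X → Prop) {M0 : Multiset X}
    (h : P M0) : ∃ I, P I ∧ ∀ I', P I' → Multiset.card I ≤ Multiset.card I' := by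
  have hne : {n : ℕ | ∃ I, P I ∧ Multiset.card I = n}.Nonempty := ⟨_, M0, h, rfl⟩
  obtain ⟨I, hI, hcard⟩ := Nat.sInf_mem hne
  refine ⟨I, hI, fun I' hI' => ?_⟩
  rw [hcard]
  exact Nat.sInf_le ⟨I', hI', rfl⟩

/-- a sublist of a "chain-jump" list of units with the same product is the whole list -/
theorem subchain_eq {G : Type*} [CommGroup G] (C : ℕ → Subgroup G)
    (mono : ∀ i j, i ≤ j → C i ≤ C j) :
    ∀ ws : List G, (∀ k (hk : k < ws.length), ws[k] ∈ C (k+1)) →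
      (∀ k (hk : k < ws.length), ws[k] ∉ C k) →
      ∀ W', W'.Sublist ws → W'.prod = ws.prod → W' = ws := by
  intro ws
  induction ws using List.reverseRecOn with
  | nil =>
    intro _ _ W' hW' _
    exact List.sublist_nil.mp hW'
  | append_singleton t w ih =>
    intro hmem hnot W' hW' hprod
    have hlen : ∀ k (hk : k < t.length), k < (t ++ [w]).length := by
      simp only [List.length_append, List.length_cons, List.length_nil]; omega
    have hget : ∀ k (hk : k < t.length), (t ++ [w])[k]'(hlen k hk) = t[k] := by
      intro k hk; rw [List.getElem_append_left]
    have hmem' : ∀ k (hk : k < t.length), t[k] ∈ C (k+1) := by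
      intro k hk; have := hmem k (hlen k hk); rwa [hget k hk] at this
    have hnot' : ∀ k (hk : k < t.length), t[k] ∉ C k := by
      intro k hk; have := hnot k (hlen k hk); rwa [hget k hk] at this
    obtain ⟨X, Y, rfl, hX, hY⟩ := List.sublist_append_iff.mp hW'
    rcases List.sublist_singleton.mp hY with rfl | rfl
    · -- Y = [] : contradiction
      exfalso
      have htw : w = (t ++ [w])[t.length]'(by simp) := by
        rw [List.getElem_append_right] <;> simp
      have hwnot : w ∉ C t.length := by
        have := hnot t.length (by simp)
        rwa [← htw] at this
      apply hwnot
      have hXmem : X.prod ∈ C t.length := by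
        apply Subgroup.list_prod_mem
        intro x hx
        have hxt : x ∈ t := hX.subset hx
        obtain ⟨k, hk, rfl⟩ := List.mem_iff_getElem.mp hxt
        exact mono (k+1) t.length hk (hmem' k hk)
      have htmem : t.prod ∈ C t.length := by
        apply Subgroup.list_prod_mem
        intro x hx
        obtain ⟨k, hk, rfl⟩ := List.mem_iff_getElem.mp hx
        exact mono (k+1) t.length hk (hmem' k hk)
      have : w = t.prod⁻¹ * X.prod := by
        simp only [List.append_nil] at hprod
        rw [hprod, List.prod_append, List.prod_cons, List.prod_nil, mul_one]
        group
      rw [this]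
      exact Subgroup.mul_mem _ (Subgroup.inv_mem _ htmem) hXmem
    · -- Y = [w]
      have hXprod : X.prod = t.prod := by
        have := hprod
        simp only [List.prod_append, List.prod_cons, List.prod_nil, mul_one] at this
        exact mul_right_cancel this
      rw [ih hmem' hnot' X hX hXprod]

theorem prod_map_inl' {M N : Type*} [CommMonoid M] [CommMonoid N] (l : List M) :
    (l.map (⇑(MonoidHom.inl M N))).prod = (l.prod, (1 : N)) := by
  rw [List.prod_hom l (MonoidHom.inl M N)]; rfl

section Claim
variable {S : Type*} [CommMonoidWithZero S] [Finite S]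
variable {S' : Type*} [CommMonoid S'] [Finite S']

theorem exists_subseq_mod (H : Subgroup Sˣ) (C : ℕ → Subgroup Sˣ)
    (mono : ∀ i j, i ≤ j → C i ≤ C j) (ws : List Sˣ)
    (hmem : ∀ k (hk : k < ws.length), ws[k] ∈ C (k+1))
    (hnot : ∀ k (hk : k < ws.length), ws[k] ∉ C k)
    (hwsH : ∀ w ∈ ws, w ∈ H)
    (F : List (Sˣ × S')) (hlen : Dnat (Sˣ × S') ≤ F.length + ws.length) :
    ∃ F' : List (Sˣ × S'), F'.Sublist F ∧ F'.length < F.length ∧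
      (F'.prod).2 = (F.prod).2 ∧ ∃ h ∈ H, (F.prod).1 = (F'.prod).1 * h := by
  set E : List (Sˣ × S') := F ++ ws.map (⇑(MonoidHom.inl Sˣ S')) with hE
  have hElen : E.length = F.length + ws.length := by simp [hE]
  obtain ⟨B, hB, hBlen, hBprod⟩ := reducible_of_dnat_le (Sˣ × S') (A := E) (by rw [hElen]; omega)
  rw [hE] at hB
  obtain ⟨F', W₀, rfl, hF', hW₀⟩ := List.sublist_append_iff.mp hB
  obtain ⟨W', hW', rfl⟩ := List.sublist_map_iff.mp hW₀
  rw [List.prod_append, List.prod_append, prod_map_inl', prod_map_inl'] at hBprod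
  have h1 : (F'.prod).1 * W'.prod = (F.prod).1 * ws.prod := by
    have := congrArg Prod.fst hBprod; simpa using this
  have h2 : (F'.prod).2 = (F.prod).2 := by
    have := congrArg Prod.snd hBprod; simpa using this
  rcases Nat.lt_or_ge F'.length F.length with hlt | hge
  · refine ⟨F', hF', hlt, h2, W'.prod * ws.prod⁻¹, ?_, ?_⟩
    · apply Subgroup.mul_mem
      · exact Subgroup.list_prod_mem _ (fun x hx => hwsH x (hW'.subset hx))
      · exact Subgroup.inv_mem _ (Subgroup.list_prod_mem _ hwsH)
    · rw [← mul_assoc, h1, mul_assoc, mul_inv_cancel, mul_one]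
  · exfalso
    have hFF : F' = F := hF'.eq_of_length (le_antisymm hF'.length_le hge)
    subst hFF
    have hWprod : W'.prod = ws.prod := by
      exact mul_left_cancel h1
    have := subchain_eq C mono ws hmem hnot W' hW' hWprod
    subst this
    simp only [List.length_append, List.length_map, hElen] at hBlen
    omega

end Claim

section Helpers
variable {S : Type*} [CommMonoid S] {S' : Type*} [CommMonoid S']

theorem mprod_fst (Mst : Multiset (S × S')) : (Mst.prod).1 = (Mst.map Prod.fst).prod := by
  rw [← MonoidHom.coe_fst (M := S) (N := S'), Multiset.prod_hom Mst (MonoidHom.fst S S')]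

theorem mprod_snd (Mst : Multiset (S × S')) : (Mst.prod).2 = (Mst.map Prod.snd).prod := by
  rw [← MonoidHom.coe_snd (M := S) (N := S'), Multiset.prod_hom Mst (MonoidHom.snd S S')]

theorem lprod_fst (l : List (S × S')) : (l.prod).1 = (l.map Prod.fst).prod := by
  rw [← MonoidHom.coe_fst (M := S) (N := S'), List.prod_hom l (MonoidHom.fst S S')]

theorem lprod_snd (l : List (S × S')) : (l.prod).2 = (l.map Prod.snd).prod := by
  rw [← MonoidHom.coe_snd (M := S) (N := S'), List.prod_hom l (MonoidHom.snd S S')]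

theorem coe_map_prod {X Y : Type*} [CommMonoid Y] (l : List X) (f : X → Y) :
    ((↑l : Multiset X).map f).prod = (l.map f).prod := by
  rw [Multiset.map_coe, Multiset.prod_coe]

theorem prod_fst_units {S : Type*} [CommMonoidWithZero S] {S' : Type*} [CommMonoid S']
    (s : S) (g : S × S' → Sˣ × S') :
    ∀ LK : List (S × S'), (∀ p ∈ LK, s * p.1 = s * ↑((g p).1)) →
      s * (LK.map Prod.fst).prod = s * ↑(((LK.map g).prod).1) := by
  intro LK
  induction LK with
  | nil => simp
  | cons p LK ih =>
    intro hp
    have hhead : s * p.1 = s * ↑((g p).1) := hp p List.mem_cons_self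
    have htail := ih (fun q hq => hp q (List.mem_cons_of_mem p hq))
    simp only [List.map_cons, List.prod_cons, Prod.fst_mul, Units.val_mul]
    calc s * (p.1 * (LK.map Prod.fst).prod)
        = (s * p.1) * (LK.map Prod.fst).prod := by rw [mul_assoc]
      _ = (s * ↑((g p).1)) * (LK.map Prod.fst).prod := by rw [hhead]
      _ = ↑((g p).1) * (s * (LK.map Prod.fst).prod) := by rw [mul_comm s _, mul_assoc]
      _ = ↑((g p).1) * (s * ↑(((LK.map g).prod).1)) := by rw [htail]
      _ = s * (↑((g p).1) * ↑(((LK.map g).prod).1)) := by rw [← mul_assoc, mul_comm _ s, mul_assoc]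

theorem prod_snd_units {S : Type*} [CommMonoidWithZero S] {S' : Type*} [CommMonoid S']
    (g : S × S' → Sˣ × S') (hg : ∀ p, (g p).2 = p.2)
    (LK : List (S × S')) : ((LK.map g).prod).2 = (LK.map Prod.snd).prod := by
  rw [lprod_snd, List.map_map]
  congr 1
  exact List.map_congr_left (fun p _ => hg p)

end Helpers

section Upper
variable {S : Type*} [CommMonoidWithZero S] [Finite S]
variable {S' : Type*} [CommMonoid S'] [Finite S']

theorem upper_case_zero (A : List (S × S'))
    (hlen : DnatRel S + Dnat S' - 1 ≤ A.length)
    (h0 : (A.prod).1 = 0) : Reducible A := by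
  classical
  rw [reducible_iff_multiset]
  set P : Multiset (S × S') → Prop :=
    fun Mst => Mst ≤ ↑A ∧ (Mst.map Prod.fst).prod = 0 with hP
  have hPA : P ↑A := ⟨le_refl _, by rw [coe_map_prod, ← lprod_fst]; exact h0⟩
  obtain ⟨MI, ⟨hMIle, hMI0⟩, hmin⟩ := exists_minimal_multiset P hPA
  -- the minimal zero multiset is short
  have hcard : Multiset.card MI ≤ DnatRel S - 1 := by
    by_contra hc
    have hcard' : DnatRel S ≤ Multiset.card MI := by omega
    set LI := MI.toList with hLI
    have hLIcoe : (↑LI : Multiset (S × S')) = MI := MI.coe_toList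
    have hLIlen : (LI.map Prod.fst).length = Multiset.card MI := by
      simp [hLI]
    have hLIprod : (LI.map Prod.fst).prod = 0 := by
      rw [← coe_map_prod LI Prod.fst, hLIcoe]; exact hMI0
    obtain ⟨LS, hsub, hslen, hsprod⟩ :=
      reducible_of_dnatRel_le S (by rw [hLIlen]; exact hcard') hLIprod
    obtain ⟨LI', hLI', rfl⟩ := List.sublist_map_iff.mp hsub
    have hPI' : P ↑LI' := by
      constructor
      · exact le_trans (le_of_eq_of_le rfl (Multiset.coe_le.mpr hLI'.subperm))
          (by rw [hLIcoe] at *; exact hMIle)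
      · rw [coe_map_prod]; rw [hsprod, hLIprod]
    have := hmin _ hPI'
    simp only [Multiset.coe_card] at this
    rw [List.length_map, List.length_map, hLI] at hslen
    simp only [Multiset.length_toList] at hslen
    omega
  -- the complement
  set MJ := (↑A : Multiset (S × S')) - MI with hMJ
  have hsum : MI + MJ = ↑A := add_tsub_cancel_of_le hMIle
  have hcards : Multiset.card MI + Multiset.card MJ = A.length := by
    rw [← Multiset.card_add, hsum, Multiset.coe_card]
  have hDS' := dnat_pos S'
  have hDrel := dnatRel_pos S
  set LJ := MJ.toList with hLJ
  have hLJcoe : (↑LJ : Multiset (S × S')) = MJ := MJ.coe_toList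
  have hLJlen : (LJ.map Prod.snd).length = Multiset.card MJ := by simp [hLJ]
  obtain ⟨LS, hsub, hslen, hsprod⟩ := reducible_of_dnat_le S'
    (A := LJ.map Prod.snd) (by rw [hLJlen]; omega)
  obtain ⟨LJ', hLJ', rfl⟩ := List.sublist_map_iff.mp hsub
  refine ⟨MI + ↑LJ', ?_, ?_, ?_⟩
  · rw [← hsum]
    exact add_le_add_right (show (↑LJ' : Multiset (S × S')) ≤ MJ by rw [← hLJcoe]; exact Multiset.coe_le.mpr hLJ'.subperm) MI
  · rw [Multiset.card_add, Multiset.coe_card]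
    rw [List.length_map, List.length_map] at hslen
    have : LJ.length = Multiset.card MJ := by simp [hLJ]
    omega
  · have hA : A.prod = (MI + MJ).prod := by rw [hsum, Multiset.prod_coe]
    rw [hA, Multiset.prod_add, Multiset.prod_add]
    apply Prod.ext
    · simp only [Prod.fst_mul]
      rw [mprod_fst MI] at *
      rw [hMI0, zero_mul, zero_mul]
    · simp only [Prod.snd_mul]
      congr 1
      rw [mprod_snd, mprod_snd, ← hLJcoe, Multiset.map_coe, Multiset.map_coe,
        Multiset.prod_coe, Multiset.prod_coe, hsprod]

end Upper

section UpperNZ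
variable {S : Type*} [CommMonoidWithZero S] [Finite S]
variable {S' : Type*} [CommMonoid S'] [Finite S']

theorem upper_case_nonzero (hus : UnitStabilizedPair S ({0} : Set S)) (A : List (S × S'))
    (hlen : Dnat (Sˣ × S') ≤ A.length)
    (h0 : (A.prod).1 ≠ 0) : Reducible A := by
  classical
  rw [reducible_iff_multiset]
  set α := (A.prod).1 with hα
  set P : Multiset (S × S') → Prop :=
    fun Mst => Mst ≤ ↑A ∧ stabSub ((Mst.map Prod.fst).prod) = stabSub α with hP
  have hPA : P ↑A := ⟨le_refl _, by rw [coe_map_prod, ← lprod_fst]⟩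
  obtain ⟨MI, ⟨hMIle, hMIstab⟩, hmin⟩ := exists_minimal_multiset P hPA
  set s := (MI.map Prod.fst).prod with hs
  set MJ := (↑A : Multiset (S × S')) - MI with hMJdef
  have hsum : MI + MJ = ↑A := add_tsub_cancel_of_le hMIle
  set t := (MJ.map Prod.fst).prod with ht
  have hst : s * t = α := by
    rw [hα, ← Multiset.prod_coe A, ← hsum, mprod_fst, Multiset.map_add, Multiset.prod_add]
  -- key: elements dividing the rest act as units on s
  have hunit : ∀ x r : S, s * x * r = α → ∃ u : Sˣ, s * x = s * ↑u := by
    intro x r h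
    have hsx0 : s * x ≠ 0 := by
      intro h'
      exact h0 (by rw [← h, h', zero_mul])
    have heq : stabSub s = stabSub (s * x) := by
      apply le_antisymm (stabSub_le_mul s x)
      rw [hMIstab]
      calc stabSub (s * x) ≤ stabSub (s * x * r) := stabSub_le_mul _ _
        _ = stabSub α := by rw [h]
    apply hus s x (by simpa using hsx0)
    exact congrArg (fun (K : Subgroup Sˣ) => (K : Set Sˣ)) heq
  -- list representations
  set LI := MI.toList with hLI
  have hLIcoe : (↑LI : Multiset (S × S')) = MI := MI.coe_toList
  set LIf := LI.map Prod.fst with hLIf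
  set m := LI.length with hm
  have hmcard : m = Multiset.card MI := by rw [hm, hLI, Multiset.length_toList]
  have hLIflen : LIf.length = m := by rw [hLIf, List.length_map, hm]
  have hLIfprod : LIf.prod = s := by
    rw [hLIf, hs, ← hLIcoe, coe_map_prod]
  have hQm : (LIf.take m).prod = s := by
    rw [← hLIflen, List.take_length, hLIfprod]
  have hQdvd : ∀ k, (LIf.take k).prod * (LIf.drop k).prod = s := by
    intro k
    rw [← hLIfprod]
    exact LIf.prod_take_mul_prod_drop k
  have hmono : ∀ i j, i ≤ j →
      stabSub ((LIf.take i).prod) ≤ stabSub ((LIf.take j).prod) := by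
    intro i j hij
    have hpj : (LIf.take j).prod
        = (LIf.take i).prod * ((LIf.take j).drop i).prod := by
      conv_lhs => rw [← List.prod_take_mul_prod_drop (LIf.take j) i]
      rw [List.take_take, min_eq_left hij]
    rw [hpj]
    exact stabSub_le_mul _ _
  -- strict chain
  have hchain : ∀ k (hk : k < m),
      stabSub ((LIf.take k).prod) < stabSub ((LIf.take (k+1)).prod) := by
    intro k hk
    rcases lt_or_eq_of_le (hmono k (k+1) (by omega)) with hlt | heq
    · exact hlt
    · exfalso
      have hkl : k < LIf.length := by omega
      have hx : (LIf.take (k+1)).prod = (LIf.take k).prod * LIf[k]'hkl :=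
        List.prod_take_succ LIf k hkl
      have hαval : ((LIf.take k).prod * LIf[k]'hkl) * ((LIf.drop (k+1)).prod * t) = α := by
        rw [← hx, ← mul_assoc, hQdvd (k+1), hst]
      have hnz : (LIf.take k).prod * LIf[k]'hkl ≠ 0 := by
        intro h'
        rw [h', zero_mul] at hαval
        exact h0 hαval.symm
      have heq' : stabSub ((LIf.take k).prod)
          = stabSub ((LIf.take k).prod * LIf[k]'hkl) := by
        rw [← hx]; exact heq
      obtain ⟨u, hu⟩ : ∃ u : Sˣ, (LIf.take k).prod * LIf[k]'hkl
          = (LIf.take k).prod * ↑u := by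
        apply hus ((LIf.take k).prod) (LIf[k]'hkl) (by simpa using hnz)
        exact congrArg (fun (K : Subgroup Sˣ) => (K : Set Sˣ)) heq'
      set LI' := LI.take k ++ LI.drop (k+1) with hLI'
      have hsubLI : LI'.Sublist LI := by
        have hd : LI.drop (k+1) = (LI.drop k).drop 1 := by
          rw [List.drop_drop]
        have hdd : (LI.drop (k+1)).Sublist (LI.drop k) := by
          rw [hd]; exact List.drop_sublist _ _
        have h2 := hdd.append_left (LI.take k)
        rwa [LI.take_append_drop k] at h2
      have hPI' : P ↑LI' := by
        constructor
        · exact le_trans (Multiset.coe_le.mpr hsubLI.subperm) (by rw [hLIcoe]; exact hMIle)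
        · have hmap : LI'.map Prod.fst = LIf.take k ++ LIf.drop (k+1) := by
            rw [hLI', List.map_append, hLIf, List.map_take, List.map_drop]
          have hsval : s = ((LIf.take k).prod * (LIf.drop (k+1)).prod) * ↑u := by
            rw [mul_right_comm, ← hu, ← hx, hQdvd (k+1)]
          rw [coe_map_prod, hmap, List.prod_append, ← hMIstab]
          conv_rhs => rw [hsval]
          rw [stabSub_mul_unit]
      have hcard' := hmin _ hPI'
      rw [← hmcard] at hcard'
      simp only [Multiset.coe_card, hLI', List.length_append, List.length_take,
        List.length_drop] at hcard'
      omega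
  -- choose the jump units
  have hwex : ∀ k, k < m → ∃ w : Sˣ, w ∈ stabSub ((LIf.take (k+1)).prod)
      ∧ w ∉ stabSub ((LIf.take k).prod) := by
    intro k hk
    obtain ⟨hle, x, hx1, hx2⟩ := SetLike.lt_iff_le_and_exists.mp (hchain k hk)
    exact ⟨x, hx1, hx2⟩
  set wfun : ℕ → Sˣ := fun k => if h : k < m then (hwex k h).choose else 1 with hwfun
  set ws : List Sˣ := (List.range m).map wfun with hws
  have hwslen : ws.length = m := by simp [hws]
  have hwsget : ∀ k (hk : k < m), ws[k]'(by omega) = wfun k := by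
    intro k hk
    simp only [hws, List.getElem_map, List.getElem_range]
  have hwspec : ∀ k (hk : k < m), wfun k ∈ stabSub ((LIf.take (k+1)).prod)
      ∧ wfun k ∉ stabSub ((LIf.take k).prod) := by
    intro k hk
    simp only [hwfun, dif_pos hk]
    exact (hwex k hk).choose_spec
  set C : ℕ → Subgroup Sˣ := fun k => stabSub ((LIf.take (min k m)).prod) with hC
  have hCmono : ∀ i j, i ≤ j → C i ≤ C j := by
    intro i j hij
    exact hmono _ _ (by omega)
  have hmem : ∀ k (hk : k < ws.length), ws[k] ∈ C (k+1) := by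
    intro k hk
    rw [hwsget k (by omega)]
    have hmin' : min (k+1) m = k + 1 := by omega
    simp only [hC, hmin']
    exact (hwspec k (by omega)).1
  have hnot : ∀ k (hk : k < ws.length), ws[k] ∉ C k := by
    intro k hk
    rw [hwsget k (by omega)]
    have hmin' : min k m = k := by omega
    simp only [hC, hmin']
    exact (hwspec k (by omega)).2
  have hwsH : ∀ w ∈ ws, w ∈ stabSub α := by
    intro w hw
    obtain ⟨k, hk, rfl⟩ := List.mem_iff_getElem.mp hw
    rw [hwsget k (by omega)]
    have h1 := (hwspec k (by omega)).1
    have h2 := hmono (k+1) m (by omega)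
    rw [hQm] at h2
    rw [← hMIstab]
    exact h2 h1
  -- the complement list and its unit labels
  set LJ := MJ.toList with hLJ
  have hLJcoe : (↑LJ : Multiset (S × S')) = MJ := MJ.coe_toList
  have hLJex : ∀ p ∈ LJ, ∃ u : Sˣ, s * p.1 = s * ↑u := by
    intro p hp
    have hpMJ : p ∈ MJ := by rw [← hLJcoe] at *; exact hp
    have : MJ = p ::ₘ MJ.erase p := (Multiset.cons_erase hpMJ).symm
    apply hunit p.1 (((MJ.erase p).map Prod.fst).prod)
    rw [mul_assoc, ← Multiset.prod_cons, ← Multiset.map_cons, ← this, ← ht, hst]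
  set g : S × S' → Sˣ × S' :=
    fun p => (if h : ∃ u : Sˣ, s * p.1 = s * ↑u then h.choose else 1, p.2) with hg
  have hg2 : ∀ p, (g p).2 = p.2 := fun p => rfl
  have hgspec : ∀ p ∈ LJ, s * p.1 = s * ↑((g p).1) := by
    intro p hp
    rw [hg]
    simp only [dif_pos (hLJex p hp)]
    exact (hLJex p hp).choose_spec
  set F := LJ.map g with hF
  have hFlen : F.length = Multiset.card MJ := by
    rw [hF, List.length_map, hLJ, Multiset.length_toList]
  have hcards : Multiset.card MI + Multiset.card MJ = A.length := by
    rw [← Multiset.card_add, hsum, Multiset.coe_card]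
  obtain ⟨F', hF'sub, hF'len, hsnd, h, hH, hfst⟩ :=
    exists_subseq_mod (stabSub α) C hCmono ws hmem hnot hwsH F
      (by rw [hFlen, hwslen]; omega)
  obtain ⟨LJ', hLJ', rfl⟩ := List.sublist_map_iff.mp hF'sub
  -- final assembly
  refine ⟨MI + ↑LJ', ?_, ?_, ?_⟩
  · rw [← hsum]
    exact add_le_add_right (show (↑LJ' : Multiset (S × S')) ≤ MJ by rw [← hLJcoe]; exact Multiset.coe_le.mpr hLJ'.subperm) MI
  · rw [Multiset.card_add, Multiset.coe_card, ← hcards]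
    have h1 : LJ'.length < LJ.length := by
      rw [hF, List.length_map] at hF'len
      rw [List.length_map] at hF'len
      exact hF'len
    have h2 : LJ.length = Multiset.card MJ := by rw [hLJ, Multiset.length_toList]
    omega
  · have hAprod : A.prod = MI.prod * MJ.prod := by
      rw [← Multiset.prod_coe A, ← hsum, Multiset.prod_add]
    apply Prod.ext
    · -- first components
      rw [hAprod]
      simp only [Prod.fst_mul, Multiset.prod_add]
      rw [mprod_fst MI, ← hs, mprod_fst MJ, ← ht, mprod_fst (↑LJ' : Multiset (S × S')),
        coe_map_prod]
      have hleft : s * (LJ'.map Prod.fst).prod = s * ↑(((LJ'.map g).prod).1) :=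
        prod_fst_units s g LJ' (fun p hp => hgspec p (hLJ'.subset hp))
      have hright : s * t = s * ↑((F.prod).1) := by
        rw [ht, ← hLJcoe, coe_map_prod, hF]
        exact prod_fst_units s g LJ (fun p hp => hgspec p hp)
      rw [hleft, hst]
      have hα' : α = (s * ↑(((LJ'.map g).prod).1)) * ↑h := by
        rw [← hst, hright, hfst, Units.val_mul, ← mul_assoc]
      have hhinv : (↑(h⁻¹) : S) * α = α := (stabSub α).inv_mem hH
      calc s * ↑(((LJ'.map g).prod).1)
          = (s * ↑(((LJ'.map g).prod).1)) * ↑h * ↑(h⁻¹) := by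
            rw [Units.mul_inv_cancel_right]
        _ = α * ↑(h⁻¹) := by rw [← hα']
        _ = α := by rw [mul_comm]; exact hhinv
    · -- second components
      rw [hAprod]
      simp only [Prod.snd_mul, Multiset.prod_add]
      rw [mprod_snd MI, mprod_snd MJ, mprod_snd (↑LJ' : Multiset (S × S')), coe_map_prod]
      congr 1
      have h1 : (LJ'.map Prod.snd).prod = ((LJ'.map g).prod).2 :=
        (prod_snd_units g hg2 LJ').symm
      have h2 : ((F.prod)).2 = (LJ.map Prod.snd).prod := prod_snd_units g hg2 LJ
      rw [h1, hsnd, h2, ← hLJcoe, coe_map_prod]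

end UpperNZ

section Final
variable {S : Type*} [CommMonoidWithZero S] [Finite S]
variable {S' : Type*} [CommMonoid S'] [Finite S']

theorem dnat_prod_eq (hus : UnitStabilizedPair S ({0} : Set S)) :
    Dnat (S × S') = max (Dnat (Sˣ × S')) (DnatRel S + Dnat S' - 1) := by
  apply le_antisymm
  · apply Nat.sInf_le
    refine ⟨lt_of_lt_of_le (dnat_pos (Sˣ × S')) (le_max_left _ _), ?_⟩
    intro A hA
    by_cases h0 : (A.prod).1 = 0
    · exact upper_case_zero A (hA ▸ le_max_right _ _) h0
    · exact upper_case_nonzero hus A (hA ▸ le_max_left _ _) h0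
  · exact max_le lower_bound_units lower_bound_sum

theorem davenport_prod_eq (hus : UnitStabilizedPair S ({0} : Set S)) :
    davenport (S × S') =
      max (davenport (Sˣ × S')) (davenportRel S {0} + davenport S' - 1) := by
  rw [davenport_eq_dnat, davenport_eq_dnat, davenportRel_eq_dnatRel, davenport_eq_dnat,
    dnat_prod_eq hus]
  have h1 : (DnatRel S : ℕ∞) + (Dnat S' : ℕ∞) - 1 = ((DnatRel S + Dnat S' - 1 : ℕ) : ℕ∞) := by
    rw [ENat.coe_sub, Nat.cast_add, Nat.cast_one]
  rw [h1]
  rcases le_total (Dnat (Sˣ × S')) (DnatRel S + Dnat S' - 1) with h | h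
  · rw [max_eq_right h, max_eq_right (by exact_mod_cast h)]
  · rw [max_eq_left h, max_eq_left (by exact_mod_cast h)]

end Final

theorem davenport_prod_almost_unit_stabilized {S : Type*} [CommMonoidWithZero S]
    [Finite S] (hus : UnitStabilizedPair S ({0} : Set S))
    {S' : Type*} [CommMonoid S'] [Finite S'] :
    davenport (S × S') =
      max (davenport (Sˣ × S')) (davenportRel S {0} + davenport S' - 1) :=
  davenport_prod_eq hus
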